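/- For every k ≥ 3 and every m, m ≤ m[k←k+1], where m[k←k+1] is the base change of m from base k to base k+1 acting hereditarily on both the index argument and the second argument of the Ackermann function. -/

import Mathlib

/-- The parametrized Ackermann function: `A a k b` is `A_a(k,b)`. -/
def A : ℕ → ℕ → ℕ → ℕ
  | 0, _, b => b + 1
  | a+1, k, 0 => (fun x => A a k x)^[k] 0
  | a+1, k, b+1 => (fun x => A a k x)^[k] (A (a+1) k b)
  termination_by a _ b => (a, b)

/-- `m = A_a(k,b) + l` is the `k`-normal form of `m`: `a` is maximal with
`A_a(k,0) ≤ m` and `b` is maximal with `A_a(k,b) ≤ m`. -/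
def IsNF (k m a b l : ℕ) : Prop :=
  m = A a k b + l ∧ A a k 0 ≤ m ∧
  (∀ a', A a' k 0 ≤ m → a' ≤ a) ∧
  (∀ b', A a k b' ≤ m → b' ≤ b)

/-- The graph of the hereditary base change operation `m ↦ m[k←k+1]`. -/
inductive BC (k : ℕ) : ℕ → ℕ → Prop
  | zero : BC k 0 0
  | step {a b l a' b'} :
      IsNF k (A a k b + l) a b l → BC k a a' → BC k b b' →
      BC k (A a k b + l) (A a' (k+1) b' + l)

/-- For every `k ≥ 3`, `m ≤ m[k←k+1]`. -/

lemma A_zero (k b : ℕ) : A 0 k b = b + 1 := by simp [A]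

lemma A_succ_zero (a k : ℕ) : A (a+1) k 0 = (fun x => A a k x)^[k] 0 := by rw [A]

lemma A_succ_succ (a k b : ℕ) :
    A (a+1) k (b+1) = (fun x => A a k x)^[k] (A (a+1) k b) := by rw [A]

lemma le_iterate {f : ℕ → ℕ} (hf : ∀ y, y ≤ f y) (n x : ℕ) : x ≤ f^[n] x := by
  induction n with
  | zero => simp
  | succ n ih => rw [Function.iterate_succ_apply']; exact ih.trans (hf _)

/-- `b + 1 ≤ A a k b` when `1 ≤ k`. -/
lemma succ_le_A (k : ℕ) (hk : 1 ≤ k) : ∀ a b, b + 1 ≤ A a k b := by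
  intro a
  induction a with
  | zero => intro b; simp [A_zero]
  | succ a ih =>
    have hy : ∀ y, y ≤ A a k y := fun y => (Nat.le_succ y).trans (ih y)
    obtain ⟨j, rfl⟩ : ∃ j, k = j + 1 := ⟨k - 1, by omega⟩
    intro b
    induction b with
    | zero =>
      rw [A_succ_zero, Function.iterate_succ_apply']
      have := ih ((fun x => A a (j+1) x)^[j] 0)
      simpa using Nat.le_trans (by omega) this
    | succ b ihb =>
      rw [A_succ_succ, Function.iterate_succ_apply']
      have h1 : A (a+1) (j+1) b ≤ (fun x => A a (j+1) x)^[j] (A (a+1) (j+1) b) :=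
        le_iterate hy j _
      have h2 := ih ((fun x => A a (j+1) x)^[j] (A (a+1) (j+1) b))
      omega

/-- monotone in b -/
lemma A_mono_b {k : ℕ} (hk : 1 ≤ k) (a : ℕ) : Monotone (A a k) := by
  apply monotone_nat_of_le_succ
  intro b
  cases a with
  | zero => simp [A_zero]
  | succ a =>
    rw [A_succ_succ]
    exact le_iterate (fun y => (Nat.le_succ y).trans (succ_le_A k hk a y)) k _

/-- monotone in a -/
lemma A_le_A_succ {k : ℕ} (hk : 1 ≤ k) (a : ℕ) : ∀ b, A a k b ≤ A (a+1) k b := by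
  have hy : ∀ y, y ≤ A a k y := fun y => (Nat.le_succ y).trans (succ_le_A k hk a y)
  obtain ⟨j, rfl⟩ : ∃ j, k = j + 1 := ⟨k - 1, by omega⟩
  intro b
  cases b with
  | zero =>
    rw [A_succ_zero, Function.iterate_succ_apply']
    exact A_mono_b (by omega) a (Nat.zero_le _) |>.trans le_rfl
  | succ b =>
    rw [A_succ_succ, Function.iterate_succ_apply']
    calc A a (j+1) (b+1) ≤ A a (j+1) (A (a+1) (j+1) b) :=
          A_mono_b (by omega) a (succ_le_A _ (by omega) _ _)
      _ ≤ _ := A_mono_b (by omega) a (le_iterate hy j _)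

lemma A_mono_a {k : ℕ} (hk : 1 ≤ k) {a a' : ℕ} (h : a ≤ a') (b : ℕ) :
    A a k b ≤ A a' k b := by
  induction a' with
  | zero => simp [Nat.le_zero.mp h]
  | succ a' ih =>
    rcases Nat.le_succ_iff.mp h with h' | rfl
    · exact (ih h').trans (A_le_A_succ hk a' b)
    · rfl

lemma iterate_le_iterate {f g : ℕ → ℕ} (hfg : ∀ y, f y ≤ g y) (hg : Monotone g)
    (n : ℕ) : ∀ x y, x ≤ y → f^[n] x ≤ g^[n] y := by
  induction n with
  | zero => simp only [Function.iterate_zero, id]; exact fun _ _ h => h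
  | succ n ih =>
    intro x y h
    rw [Function.iterate_succ_apply', Function.iterate_succ_apply']
    exact (hfg _).trans (hg (ih _ _ h))

/-- monotone in k -/
lemma A_le_A_base_succ {k : ℕ} (hk : 1 ≤ k) : ∀ a b, A a k b ≤ A a (k+1) b := by
  intro a
  induction a with
  | zero => simp [A_zero]
  | succ a ih =>
    have hg : Monotone (fun x => A a (k+1) x) := A_mono_b (by omega) a
    have hgy : ∀ y, y ≤ A a (k+1) y :=
      fun y => (Nat.le_succ y).trans (succ_le_A (k+1) (by omega) a y)
    intro b
    induction b with
    | zero =>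
      rw [A_succ_zero, A_succ_zero, Function.iterate_succ_apply']
      exact (iterate_le_iterate ih hg k 0 0 le_rfl).trans (hgy _)
    | succ b ihb =>
      rw [A_succ_succ, A_succ_succ, Function.iterate_succ_apply']
      exact (iterate_le_iterate ih hg k _ _ ihb).trans (hgy _)

lemma A_mono_k {k k' : ℕ} (hk : 1 ≤ k) (h : k ≤ k') (a b : ℕ) :
    A a k b ≤ A a k' b := by
  induction k' with
  | zero => omega
  | succ k' ih =>
    rcases Nat.le_succ_iff.mp h with h' | rfl
    · exact (ih h').trans (A_le_A_base_succ (by omega) a b)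
    · rfl

lemma A_mono {k k' a a' b b' : ℕ} (hk : 1 ≤ k) (hkk : k ≤ k') (ha : a ≤ a')
    (hb : b ≤ b') : A a k b ≤ A a' k' b' :=
  (A_mono_a hk ha b).trans ((A_mono_k hk hkk a' b).trans
    (A_mono_b (hk.trans hkk) a' hb))

theorem base_change_le (k m m' : ℕ) (hk : 3 ≤ k) (h : BC k m m') : m ≤ m' := by
  induction h with
  | zero => exact le_refl 0
  | step hnf ha hb iha ihb =>
    exact Nat.add_le_add_right (A_mono (by omega) (Nat.le_succ k) iha ihb) _
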